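/- arXiv:math/0503464 — 2 statements merged into one kernel-verified Lean document; each statement's English description precedes it below -/
import Mathlib

section
/- Let σ be a permutation of {1,…,n} and let v₁,…,vₙ and w₁,…,wₙ be integers (degrees). Then the sum Σ_{i>j} v_i·w_j + Σ_{i<j, σ(i)>σ(j)} (w_{σ(i)}·v_{σ(j)} + v_{σ(i)}·w_{σ(j)}) + Σ_{i>j} v_{σ(i)}·w_{σ(j)} is congruent to 0 modulo 2. -/
/-- Lemma 5.4(1) of Daily–Lada, "Symmetrization of Brace Algebras":
for a permutation `σ ∈ Sₙ` and integer degrees `v, w : Fin n → ℤ`,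
`Σ_{i>j} v_i w_j + Σ_{i<j, σ(i)>σ(j)} (w_{σ(i)} v_{σ(j)} + v_{σ(i)} w_{σ(j)})
  + Σ_{i>j} v_{σ(i)} w_{σ(j)} ≡ 0 (mod 2)`. -/
theorem daily_lada_lemma_5_4_1 (n : ℕ) (σ : Equiv.Perm (Fin n)) (v w : Fin n → ℤ) :
    (∑ p ∈ Finset.univ.filter (fun p : Fin n × Fin n => p.2 < p.1), v p.1 * w p.2)
      + (∑ p ∈ Finset.univ.filter (fun p : Fin n × Fin n => p.1 < p.2 ∧ σ p.2 < σ p.1),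
          (w (σ p.1) * v (σ p.2) + v (σ p.1) * w (σ p.2)))
      + (∑ p ∈ Finset.univ.filter (fun p : Fin n × Fin n => p.2 < p.1), v (σ p.1) * w (σ p.2))
      ≡ 0 [ZMOD 2] := by
  classical
  -- reindex the third sum via (i,j) ↦ (σ i, σ j)
  have hC : (∑ p ∈ Finset.univ.filter (fun p : Fin n × Fin n => p.2 < p.1), v (σ p.1) * w (σ p.2))
      = ∑ p ∈ Finset.univ.filter (fun p : Fin n × Fin n => σ⁻¹ p.2 < σ⁻¹ p.1),
          v p.1 * w p.2 := by
    refine Finset.sum_equiv (Equiv.prodCongr σ σ) ?_ ?_ <;> simp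
  -- reindex the second sum via (i,j) ↦ (σ i, σ j)
  have hB : (∑ p ∈ Finset.univ.filter (fun p : Fin n × Fin n => p.1 < p.2 ∧ σ p.2 < σ p.1),
          (w (σ p.1) * v (σ p.2) + v (σ p.1) * w (σ p.2)))
      = ∑ p ∈ Finset.univ.filter
          (fun p : Fin n × Fin n => p.2 < p.1 ∧ σ⁻¹ p.1 < σ⁻¹ p.2),
          (w p.1 * v p.2 + v p.1 * w p.2) := by
    refine Finset.sum_equiv (Equiv.prodCongr σ σ) ?_ ?_ <;> simp [and_comm]
  -- split the first sum
  have hA : (∑ p ∈ Finset.univ.filter (fun p : Fin n × Fin n => p.2 < p.1), v p.1 * w p.2)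
      = (∑ p ∈ Finset.univ.filter
            (fun p : Fin n × Fin n => p.2 < p.1 ∧ σ⁻¹ p.2 < σ⁻¹ p.1), v p.1 * w p.2)
        + (∑ p ∈ Finset.univ.filter
            (fun p : Fin n × Fin n => p.2 < p.1 ∧ σ⁻¹ p.1 < σ⁻¹ p.2), v p.1 * w p.2) := by
    rw [← Finset.sum_filter_add_sum_filter_not
      (Finset.univ.filter (fun p : Fin n × Fin n => p.2 < p.1))
      (fun p : Fin n × Fin n => σ⁻¹ p.2 < σ⁻¹ p.1)]
    congr 1
    · rw [Finset.filter_filter]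
    · rw [Finset.filter_filter]
      apply Finset.sum_congr _ (fun _ _ => rfl)
      apply Finset.filter_congr
      intro p _
      constructor
      · rintro ⟨h1, h2⟩
        exact ⟨h1, lt_of_le_of_ne (not_lt.mp h2)
          (fun h => (ne_of_gt h1) (σ⁻¹.injective h.symm).symm)⟩
      · rintro ⟨h1, h2⟩
        exact ⟨h1, not_lt.mpr h2.le⟩
  -- split the reindexed third sum
  have hC2 : (∑ p ∈ Finset.univ.filter (fun p : Fin n × Fin n => σ⁻¹ p.2 < σ⁻¹ p.1),
          v p.1 * w p.2)
      = (∑ p ∈ Finset.univ.filter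
            (fun p : Fin n × Fin n => p.2 < p.1 ∧ σ⁻¹ p.2 < σ⁻¹ p.1), v p.1 * w p.2)
        + (∑ p ∈ Finset.univ.filter
            (fun p : Fin n × Fin n => p.2 < p.1 ∧ σ⁻¹ p.1 < σ⁻¹ p.2), v p.2 * w p.1) := by
    rw [← Finset.sum_filter_add_sum_filter_not
      (Finset.univ.filter (fun p : Fin n × Fin n => σ⁻¹ p.2 < σ⁻¹ p.1))
      (fun p : Fin n × Fin n => p.2 < p.1)]
    congr 1
    · rw [Finset.filter_filter]
      apply Finset.sum_congr _ (fun _ _ => rfl)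
      apply Finset.filter_congr
      intro p _
      exact and_comm
    · rw [Finset.filter_filter]
      -- swap the coordinates
      refine Finset.sum_equiv (Equiv.prodComm (Fin n) (Fin n)) ?_ ?_
      · intro p
        simp only [Finset.mem_filter, Finset.mem_univ, true_and, Equiv.prodComm_apply,
          Prod.fst_swap, Prod.snd_swap]
        constructor
        · rintro ⟨h1, h2⟩
          refine ⟨lt_of_le_of_ne (not_lt.mp h2)
            (fun h => (ne_of_gt h1) (by rw [h])), h1⟩
        · rintro ⟨h1, h2⟩
          exact ⟨h2, not_lt.mpr h1.le⟩
      · intro p _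
        simp [mul_comm]
  rw [hA, hB, hC, hC2]
  have : (∑ p ∈ Finset.univ.filter
            (fun p : Fin n × Fin n => p.2 < p.1 ∧ σ⁻¹ p.2 < σ⁻¹ p.1), v p.1 * w p.2)
        + (∑ p ∈ Finset.univ.filter
            (fun p : Fin n × Fin n => p.2 < p.1 ∧ σ⁻¹ p.1 < σ⁻¹ p.2), v p.1 * w p.2)
      + (∑ p ∈ Finset.univ.filter
          (fun p : Fin n × Fin n => p.2 < p.1 ∧ σ⁻¹ p.1 < σ⁻¹ p.2),
          (w p.1 * v p.2 + v p.1 * w p.2))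
      + ((∑ p ∈ Finset.univ.filter
            (fun p : Fin n × Fin n => p.2 < p.1 ∧ σ⁻¹ p.2 < σ⁻¹ p.1), v p.1 * w p.2)
        + (∑ p ∈ Finset.univ.filter
            (fun p : Fin n × Fin n => p.2 < p.1 ∧ σ⁻¹ p.1 < σ⁻¹ p.2), v p.2 * w p.1))
      = 2 * ((∑ p ∈ Finset.univ.filter
            (fun p : Fin n × Fin n => p.2 < p.1 ∧ σ⁻¹ p.2 < σ⁻¹ p.1), v p.1 * w p.2)
        + (∑ p ∈ Finset.univ.filter
            (fun p : Fin n × Fin n => p.2 < p.1 ∧ σ⁻¹ p.1 < σ⁻¹ p.2),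
            (v p.1 * w p.2 + v p.2 * w p.1))) := by
    have hc : (∑ p ∈ Finset.univ.filter
            (fun p : Fin n × Fin n => p.2 < p.1 ∧ σ⁻¹ p.1 < σ⁻¹ p.2), w p.1 * v p.2)
        = ∑ p ∈ Finset.univ.filter
            (fun p : Fin n × Fin n => p.2 < p.1 ∧ σ⁻¹ p.1 < σ⁻¹ p.2), v p.2 * w p.1 :=
      Finset.sum_congr rfl (fun p _ => mul_comm _ _)
    rw [Finset.sum_add_distrib, Finset.sum_add_distrib, hc]
    ring
  rw [this]
  exact Int.modEq_zero_iff_dvd.mpr ⟨_, rfl⟩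
end

section
/- Let σ be a permutation of {1,…,n} and let v₁,…,vₙ be integers. Then Σ_{i<j, σ(i)>σ(j)} (v_{σ(i)} + v_{σ(j)}) ≡ Σ_i (i−1)·v_i + Σ_i (i−1)·v_{σ(i)} (mod 2). -/
open Finset

private lemma dl_count (n : ℕ) (σ : Equiv.Perm (Fin n)) (i : Fin n) :
    (univ.filter (fun j => i < j ∧ σ j < σ i)).card
      + (univ.filter (fun j => j < i ∧ σ i < σ j)).card
      + 2 * (univ.filter (fun j => j < i ∧ σ j < σ i)).card
      = i.val + (σ i).val := by
  classical
  have hC : ∀ j : Fin n, j ≠ i → (σ j ≠ σ i) := fun j hj => fun h => hj (σ.injective h)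
  have h1 : (univ.filter (fun j => j < i ∧ σ i < σ j)).card
      + (univ.filter (fun j => j < i ∧ σ j < σ i)).card = i.val := by
    rw [← Finset.card_union_of_disjoint]
    · have : (univ.filter (fun j => j < i ∧ σ i < σ j))
          ∪ (univ.filter (fun j => j < i ∧ σ j < σ i)) = univ.filter (fun j => j < i) := by
        ext j
        simp only [Finset.mem_union, Finset.mem_filter, Finset.mem_univ, true_and]
        constructor
        · rintro (⟨h, _⟩ | ⟨h, _⟩) <;> exact h
        · intro h
          rcases lt_or_gt_of_ne (hC j (ne_of_lt h)) with h' | h'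
          · exact Or.inr ⟨h, h'⟩
          · exact Or.inl ⟨h, h'⟩
      rw [this]
      have : univ.filter (fun j => j < i) = Finset.Iio i := by
        ext j; simp
      rw [this, Fin.card_Iio]
    · rw [Finset.disjoint_filter]
      rintro j _ ⟨_, h1⟩ ⟨_, h2⟩
      exact absurd (h1.trans h2) (lt_irrefl _)
  have h2 : (univ.filter (fun j => i < j ∧ σ j < σ i)).card
      + (univ.filter (fun j => j < i ∧ σ j < σ i)).card = (σ i).val := by
    rw [← Finset.card_union_of_disjoint]
    · have : (univ.filter (fun j => i < j ∧ σ j < σ i))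
          ∪ (univ.filter (fun j => j < i ∧ σ j < σ i)) = univ.filter (fun j => σ j < σ i) := by
        ext j
        simp only [Finset.mem_union, Finset.mem_filter, Finset.mem_univ, true_and]
        constructor
        · rintro (⟨_, h⟩ | ⟨_, h⟩) <;> exact h
        · intro h
          have hji : j ≠ i := fun hh => absurd (hh ▸ h) (lt_irrefl _)
          rcases lt_or_gt_of_ne hji with h' | h'
          · exact Or.inr ⟨h', h⟩
          · exact Or.inl ⟨h', h⟩
      rw [this]
      have : (univ.filter (fun j => σ j < σ i)).card
          = (univ.filter (fun k => k < σ i)).card := by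
        apply Finset.card_bij (fun j _ => σ j)
        · intro j hj; simp only [Finset.mem_filter, Finset.mem_univ, true_and] at hj ⊢; exact hj
        · intro a ha b hb h; exact σ.injective h
        · intro k hk
          refine ⟨σ.symm k, ?_, by simp⟩
          simp only [Finset.mem_filter, Finset.mem_univ, true_and] at hk ⊢
          simpa using hk
      rw [this]
      have : univ.filter (fun k => k < σ i) = Finset.Iio (σ i) := by ext k; simp
      rw [this, Fin.card_Iio]
    · rw [Finset.disjoint_filter]
      rintro j _ ⟨h1, _⟩ ⟨h2, _⟩
      exact absurd (h1.trans h2) (lt_irrefl _)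
  omega

/-- Lemma 5.4(2) of Daily–Lada, "Symmetrization of Brace Algebras":
for a permutation `σ ∈ Sₙ` and integers `v : Fin n → ℤ`,
`Σ_{i<j, σ(i)>σ(j)} (v_{σ(i)} + v_{σ(j)}) ≡ Σ_i (i−1) v_i + Σ_i (i−1) v_{σ(i)} (mod 2)`
(here indices are 0-based, so the weight `i−1` of the 1-based statement becomes `i.val`). -/
theorem daily_lada_lemma_5_4_2 (n : ℕ) (σ : Equiv.Perm (Fin n)) (v : Fin n → ℤ) :
    (∑ p ∈ Finset.univ.filter (fun p : Fin n × Fin n => p.1 < p.2 ∧ σ p.2 < σ p.1),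
        (v (σ p.1) + v (σ p.2)))
      ≡ (∑ i : Fin n, (i.val : ℤ) * v i) + ∑ i : Fin n, (i.val : ℤ) * v (σ i) [ZMOD 2] := by
  classical
  set A : Fin n → ℕ := fun i => (univ.filter (fun j => i < j ∧ σ j < σ i)).card with hA
  set B : Fin n → ℕ := fun i => (univ.filter (fun j => j < i ∧ σ i < σ j)).card with hB
  set C : Fin n → ℕ := fun i => (univ.filter (fun j => j < i ∧ σ j < σ i)).card with hC
  have key : ∀ i, A i + B i + 2 * C i = i.val + (σ i).val := fun i => dl_count n σ i
  have lhs_eq : (∑ p ∈ Finset.univ.filter (fun p : Fin n × Fin n => p.1 < p.2 ∧ σ p.2 < σ p.1),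
        (v (σ p.1) + v (σ p.2)))
      = ∑ i : Fin n, ((A i : ℤ) + B i) * v (σ i) := by
    rw [Finset.sum_add_distrib]
    have e1 : (∑ p ∈ Finset.univ.filter (fun p : Fin n × Fin n => p.1 < p.2 ∧ σ p.2 < σ p.1),
        v (σ p.1)) = ∑ i : Fin n, (A i : ℤ) * v (σ i) := by
      rw [Finset.sum_filter, Fintype.sum_prod_type]
      refine Finset.sum_congr rfl fun i _ => ?_
      rw [← Finset.sum_filter]
      show (∑ _a ∈ Finset.univ.filter (fun a => i < a ∧ σ a < σ i), v (σ i)) = _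
      rw [Finset.sum_const, nsmul_eq_mul, hA]
    have e2 : (∑ p ∈ Finset.univ.filter (fun p : Fin n × Fin n => p.1 < p.2 ∧ σ p.2 < σ p.1),
        v (σ p.2)) = ∑ j : Fin n, (B j : ℤ) * v (σ j) := by
      rw [Finset.sum_filter, Fintype.sum_prod_type, Finset.sum_comm]
      refine Finset.sum_congr rfl fun j _ => ?_
      rw [← Finset.sum_filter]
      show (∑ _a ∈ Finset.univ.filter (fun a => a < j ∧ σ j < σ a), v (σ j)) = _
      rw [Finset.sum_const, nsmul_eq_mul, hB]
    rw [e1, e2, ← Finset.sum_add_distrib]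
    exact Finset.sum_congr rfl fun i _ => by ring
  have rhs_eq : ((∑ i : Fin n, (i.val : ℤ) * v i) + ∑ i : Fin n, (i.val : ℤ) * v (σ i))
      = ∑ i : Fin n, (((σ i).val : ℤ) + i.val) * v (σ i) := by
    rw [← Equiv.sum_comp σ (fun k : Fin n => (k.val : ℤ) * v k), ← Finset.sum_add_distrib]
    exact Finset.sum_congr rfl fun i _ => by ring
  rw [lhs_eq, rhs_eq, Int.modEq_iff_dvd, ← Finset.sum_sub_distrib]
  apply Finset.dvd_sum
  intro i _
  have h : ((A i : ℤ) + B i) + 2 * C i = i.val + (σ i).val := by exact_mod_cast key i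
  have e : (((σ i).val : ℤ) + i.val) * v (σ i) - ((A i : ℤ) + B i) * v (σ i)
      = 2 * ((C i : ℤ) * v (σ i)) := by
    rw [← sub_mul, show (((σ i).val : ℤ) + i.val) - ((A i : ℤ) + B i) = 2 * C i by linarith]
    ring
  rw [e]
  exact dvd_mul_right 2 _
end
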